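/- Let R be a Noetherian ring, b : C → C' a morphism of perfect complexes of R-modules, and f a central element of R such that Λ[1/f] ⊗^L Cone(b) = 0. Then for n sufficiently large, the endomorphism of Cone(b) given by multiplication by f^n is zero in the derived category. -/

import Mathlib

open CategoryTheory


-- uniform killing on a f.g. module
lemma uniform_kill {R : Type} [CommRing R] (M : Type*) [AddCommGroup M] [Module R M]
    [Module.Finite R M] (f : R) (h : ∀ x : M, ∃ n : ℕ, f ^ n • x = 0) :
    ∃ m : ℕ, ∀ x : M, f ^ m • x = 0 := by
  obtain ⟨s, hs⟩ := Module.Finite.fg_top (R := R) (M := M)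
  have key : ∀ x : M, ∃ n : ℕ, ∀ k : ℕ, n ≤ k → f ^ k • x = 0 := by
    intro x
    obtain ⟨n, hn⟩ := h x
    exact ⟨n, fun k hk => by
      rw [show k = (k - n) + n by omega, pow_add, mul_smul, hn, smul_zero]⟩
  choose e he using key
  refine ⟨s.sup e, fun x => ?_⟩
  have hx : x ∈ Submodule.span R (s : Set M) := by rw [hs]; trivial
  induction hx using Submodule.span_induction with
  | mem y hy => exact he y _ (Finset.le_sup hy)
  | zero => simp
  | add y z _ _ hy hz => rw [smul_add, hy, hz, add_zero]
  | smul r y _ hy => rw [smul_comm, hy, smul_zero]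

lemma cycle_kill {R : Type} [CommRing R] [IsNoetherianRing R]
    (K : CochainComplex (ModuleCat R) ℤ) (q : ℤ) [Module.Finite R (K.X q)]
    (f : R) (hq : ∀ x : K.homology q, ∃ n : ℕ, f ^ n • x = 0) :
    ∃ m : ℕ, ∀ z : K.X q, K.d q (q+1) z = 0 →
      ∃ y : K.X (q-1), K.d (q-1) q y = f ^ m • z := by
  set S := K.sc' (q-1) q (q+1) with hS
  have hprev : (ComplexShape.up ℤ).prev q = q - 1 := by simp
  have hnext : (ComplexShape.up ℤ).next q = q + 1 := by simp
  have e0 : K.homology q ≅ S.homology := K.homologyIsoSc' (q-1) q (q+1) hprev hnext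
  have e : (K.homology q : ModuleCat R) ≃ₗ[R] S.moduleCatLeftHomologyData.H :=
    (e0 ≪≫ S.moduleCatHomologyIso).toLinearEquiv
  have hfin2 : Module.Finite R S.X₂ := ‹Module.Finite R (K.X q)›
  have : Module.Finite R S.moduleCatLeftHomologyData.H := by
    have : IsNoetherian R S.X₂ := isNoetherian_of_isNoetherianRing_of_finite R _
    have : Module.Finite R (LinearMap.ker S.g.hom) :=
      Module.Finite.iff_fg.mpr (IsNoetherian.noetherian _)
    exact Module.Finite.quotient R _
  have htor : ∀ x : S.moduleCatLeftHomologyData.H, ∃ n : ℕ, f ^ n • x = 0 := by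
    intro x
    obtain ⟨n, hn⟩ := hq (e.symm x)
    refine ⟨n, ?_⟩
    calc f ^ n • x = e (f ^ n • e.symm x) := by rw [map_smul, e.apply_symm_apply]
      _ = 0 := by rw [hn, map_zero]
  obtain ⟨m, hm⟩ := uniform_kill (↥S.moduleCatLeftHomologyData.H) f htor
  refine ⟨m, fun z hz => ?_⟩
  set z' : LinearMap.ker S.g.hom := ⟨z, hz⟩ with hz'
  have h1 : f ^ m • ((LinearMap.range S.moduleCatToCycles).mkQ z') = 0 := hm _
  rw [← map_smul] at h1
  have h2 : f ^ m • z' ∈ LinearMap.range S.moduleCatToCycles := by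
    rwa [← Submodule.Quotient.mk_eq_zero]
  obtain ⟨y, hy⟩ := h2
  refine ⟨y, ?_⟩
  have := congrArg (Subtype.val) hy
  exact this

lemma main_homotopy {R : Type} [CommRing R] [IsNoetherianRing R]
    (K : CochainComplex (ModuleCat R) ℤ) (N : ℕ)
    (hbdd : ∀ q : ℤ, (N : ℤ) < |q| → Limits.IsZero (K.X q))
    (hfin : ∀ q : ℤ, Module.Finite R (K.X q))
    (hproj : ∀ q : ℤ, Module.Projective R (K.X q))
    (f : R) (hloc : ∀ (i : ℤ) (x : K.homology i), ∃ n : ℕ, f ^ n • x = 0) :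
    ∃ n₀ : ℕ, ∀ n : ℕ, n₀ ≤ n → Nonempty (Homotopy ((f ^ n : R) • 𝟙 K) 0) := by
  have hm' : ∀ q : ℤ, ∃ m : ℕ, ∀ z : K.X q, K.d q (q+1) z = 0 →
      ∃ y : K.X (q-1), K.d (q-1) q y = f ^ m • z := fun q =>
    haveI := hfin q
    cycle_kill K q f (hloc q)
  choose m hm using hm'
  -- the descending induction
  have ind : ∀ k : ℕ, ∃ (n : ℕ) (h : ∀ p q : ℤ, K.X p ⟶ K.X q),
      ∀ p q r : ℤ, p + 1 = q → q + 1 = r → (N : ℤ) + 1 - k ≤ q →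
        (f ^ n : R) • 𝟙 (K.X q) = K.d q r ≫ h r q + h q p ≫ K.d p q := by
    intro k
    induction k with
    | zero =>
      refine ⟨0, fun _ _ => 0, fun p q r hpq hqr hq => ?_⟩
      exact (hbdd q (lt_abs.mpr (Or.inl (by omega)))).eq_of_src _ _
    | succ k ih =>
      obtain ⟨n, h, hrel⟩ := ih
      set q0 : ℤ := (N : ℤ) - k with hq0
      set v : K.X q0 ⟶ K.X q0 :=
        (f ^ n : R) • 𝟙 (K.X q0) - K.d q0 (q0+1) ≫ h (q0+1) q0 with hv
      have hvd : v ≫ K.d q0 (q0+1) = 0 := by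
        have h1 := hrel q0 (q0+1) (q0+2) rfl (by ring) (by omega)
        have h2 : h (q0+1) q0 ≫ K.d q0 (q0+1) =
            (f ^ n : R) • 𝟙 (K.X (q0+1)) - K.d (q0+1) (q0+2) ≫ h (q0+2) (q0+1) := by
          rw [h1]; abel
        rw [hv, Preadditive.sub_comp, Linear.smul_comp, Category.id_comp,
          Category.assoc, h2, Preadditive.comp_sub, Linear.comp_smul,
          Category.comp_id, ← Category.assoc, K.d_comp_d, Limits.zero_comp,
          sub_zero, sub_self]
      have hvz : ∀ x : K.X q0, K.d q0 (q0+1) (v x) = 0 := fun x =>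
        congrArg (fun (φ : K.X q0 ⟶ K.X (q0+1)) => φ x) hvd
      -- lift using projectivity
      set g : K.X (q0-1) →ₗ[R] K.X q0 := (K.d (q0-1) q0).hom with hg
      have hw : ∀ x : K.X q0,
          ((f ^ (m q0) : R) • v.hom) x ∈ LinearMap.range g := by
        intro x
        obtain ⟨y, hy⟩ := hm q0 (v x) (hvz x)
        exact ⟨y, hy⟩
      haveI := hproj q0
      obtain ⟨ψ, hψ⟩ := Module.projective_lifting_property g.rangeRestrict
        (LinearMap.codRestrict (LinearMap.range g)
          ((f ^ (m q0) : R) • v.hom) hw)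
        (LinearMap.surjective_rangeRestrict g)
      have hkey : (ModuleCat.ofHom ψ : K.X q0 ⟶ K.X (q0-1)) ≫ K.d (q0-1) q0 = (f ^ (m q0) : R) • v := by
        ext x
        have := congrArg Subtype.val (LinearMap.congr_fun hψ x)
        simpa using this
      refine ⟨n + m q0, fun p q => if hc : p = q0 ∧ q = q0 - 1 then
          eqToHom (congrArg K.X hc.1) ≫ ModuleCat.ofHom ψ ≫ eqToHom (congrArg K.X hc.2.symm)
        else (f ^ (m q0) : R) • h p q, fun p q r hpq hqr hq => ?_⟩
      by_cases hcase : q0 + 1 ≤ q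
      · beta_reduce
        rw [dif_neg (by omega : ¬(r = q0 ∧ q = q0 - 1)),
          dif_neg (by omega : ¬(q = q0 ∧ p = q0 - 1)),
          Linear.comp_smul, Linear.smul_comp, ← smul_add,
          ← hrel p q r hpq hqr (by omega), smul_smul, ← pow_add]
        ring_nf
      · obtain rfl : q = q0 := by omega
        obtain rfl : p = q0 - 1 := by omega
        obtain rfl : r = q0 + 1 := by omega
        beta_reduce
        rw [dif_neg (by omega : ¬(q0 + 1 = q0 ∧ q0 = q0 - 1)),
          dif_pos ⟨rfl, rfl⟩]
        simp only [eqToHom_refl, Category.comp_id, Category.id_comp]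
        rw [hkey, hv, Linear.comp_smul, smul_sub, smul_smul, ← pow_add,
          Nat.add_comm (m q0) n]
        abel
  obtain ⟨n₀, h, hrel⟩ := ind (2 * N + 2)
  have hrel' : ∀ p q r : ℤ, p + 1 = q → q + 1 = r →
      (f ^ n₀ : R) • 𝟙 (K.X q) = K.d q r ≫ h r q + h q p ≫ K.d p q := by
    intro p q r hpq hqr
    by_cases hq : (N : ℤ) + 1 - (2 * N + 2 : ℕ) ≤ q
    · exact hrel p q r hpq hqr hq
    · refine (hbdd q ?_).eq_of_src _ _
      rcases abs_cases q with ⟨e, _⟩ | ⟨e, _⟩ <;> push_cast at hq ⊢ <;> omega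
  refine ⟨n₀, fun n hn => ⟨?_⟩⟩
  refine ⟨fun i j => if hij : j + 1 = i then
      (f ^ (n - n₀) : R) • h i j
    else 0, fun i j hij => dif_neg (by simpa using hij), fun i => ?_⟩
  have hrel2 := hrel' (i-1) i (i+1) (by omega) rfl
  rw [dNext_eq _ (show (ComplexShape.up ℤ).Rel i (i+1) from rfl),
    prevD_eq _ (show (ComplexShape.up ℤ).Rel (i-1) i from by simp)]
  beta_reduce
  rw [dif_pos rfl, dif_pos (show i - 1 + 1 = i by omega),
    HomologicalComplex.zero_f, add_zero, HomologicalComplex.smul_f_apply,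
    HomologicalComplex.id_f, Linear.comp_smul, Linear.smul_comp, ← smul_add,
    ← hrel2, smul_smul, ← pow_add, Nat.sub_add_cancel hn]


/-- Let `R` be a Noetherian (commutative, so that `f` is automatically
central) ring, `b : C ⟶ C'` a morphism of perfect complexes of `R`-modules, and `f ∈ R` such
that `R[1/f] ⊗^L Cone(b) = 0` (i.e. every homology class of the mapping cone of `b` is killed
by a power of `f`).  Then for `n` sufficiently large, multiplication by `f^n` on `Cone(b)` is
zero in the derived category (i.e. null-homotopic). -/
theorem stmt2 (R : Type) [CommRing R] [IsNoetherianRing R]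
    (C C' : CochainComplex (ModuleCat R) ℤ)
    (hCbdd : ∃ N : ℕ, ∀ q : ℤ, N < |q| → Limits.IsZero (C.X q))
    (hC'bdd : ∃ N : ℕ, ∀ q : ℤ, N < |q| → Limits.IsZero (C'.X q))
    (hCfin : ∀ q : ℤ, Module.Finite R (C.X q)) (hC'fin : ∀ q : ℤ, Module.Finite R (C'.X q))
    (hCproj : ∀ q : ℤ, Module.Projective R (C.X q))
    (hC'proj : ∀ q : ℤ, Module.Projective R (C'.X q))
    (b : C ⟶ C') (f : R)
    (hloc : ∀ (i : ℤ) (x : (CochainComplex.mappingCone b).homology i), ∃ n : ℕ, f ^ n • x = 0) :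
    ∃ n₀ : ℕ, ∀ n : ℕ, n₀ ≤ n →
      Nonempty (Homotopy ((f ^ n : R) • 𝟙 (CochainComplex.mappingCone b)) 0) := by

  obtain ⟨NC, hNC⟩ := hCbdd
  obtain ⟨NC', hNC'⟩ := hC'bdd
  set K := CochainComplex.mappingCone b with hK
  have hiso : ∀ q : ℤ, K.X q ≅ (C.X (q+1)) ⊞ (C'.X q) := fun q =>
    HomologicalComplex.homotopyCofiber.XIsoBiprod b q (q+1) rfl
  have lequiv : ∀ q : ℤ, ↥(K.X q) ≃ₗ[R] (↥(C.X (q+1)) × ↥(C'.X q)) := fun q =>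
    ((hiso q) ≪≫ ModuleCat.biprodIsoProd _ _).toLinearEquiv
  have hfin : ∀ q : ℤ, Module.Finite R (K.X q) := fun q => by
    haveI := hCfin (q+1); haveI := hC'fin q
    exact Module.Finite.equiv (lequiv q).symm
  have hproj : ∀ q : ℤ, Module.Projective R (K.X q) := fun q => by
    haveI := hCproj (q+1); haveI := hC'proj q
    exact Module.Projective.of_equiv (lequiv q).symm
  have hbdd : ∀ q : ℤ, ((max NC NC' + 1 : ℕ) : ℤ) < |q| → Limits.IsZero (K.X q) := by
    intro q hq
    have h1 : Limits.IsZero (C.X (q+1)) := hNC _ (by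
      rcases abs_cases q with ⟨e, _⟩ | ⟨e, _⟩ <;>
        rcases abs_cases (q+1) with ⟨e2, _⟩ | ⟨e2, _⟩ <;> push_cast at hq ⊢ <;> omega)
    have h2 : Limits.IsZero (C'.X q) := hNC' _ (by
      rcases abs_cases q with ⟨e, _⟩ | ⟨e, _⟩ <;> push_cast at hq ⊢ <;> omega)
    exact ((Limits.biprod_isZero_iff _ _).mpr ⟨h1, h2⟩).of_iso (hiso q)
  exact main_homotopy K (max NC NC' + 1) hbdd hfin hproj f hloc
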